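/- Define λ_{d,κ,n} = (1/2^d)·∑_{ε∈{±1}^d} ε_1⋯ε_κ · C_n^{d/2−1}((ε_1+⋯+ε_d)/d) / C_n^{d/2−1}(1), where C_n^{α} is the Gegenbauer polynomial of degree n and parameter α. Then λ_{d,κ,n} = 0 whenever 0 ≤ n < κ or n − κ is odd. -/

import Mathlib

open Polynomial

/-- The Gegenbauer (ultraspherical) polynomial `C_n^α`, defined by the standard
three-term recurrence `n C_n = 2(n+α-1) X C_{n-1} - (n+2α-2) C_{n-2}`. -/
noncomputable def gegenbauer (α : ℚ) : ℕ → Polynomial ℚ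
  | 0 => 1
  | 1 => C (2 * α) * X
  | n + 2 =>
      C (2 * ((n : ℚ) + 1 + α) / ((n : ℚ) + 2)) * X * gegenbauer α (n + 1) -
        C (((n : ℚ) + 2 * α) / ((n : ℚ) + 2)) * gegenbauer α n

/-- The eigenvalue `λ_{d,κ,n}`. -/
noncomputable def lam (d κ n : ℕ) : ℚ :=
  (1 / 2 ^ d) * ∑ ε : Fin d → ℤˣ,
    (∏ i ∈ Finset.univ.filter (fun i : Fin d => (i : ℕ) < κ), ((ε i : ℤ) : ℚ)) *
      ((gegenbauer ((d : ℚ) / 2 - 1) n).eval ((∑ i, ((ε i : ℤ) : ℚ)) / d) /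
        (gegenbauer ((d : ℚ) / 2 - 1) n).eval 1)

/-- Coefficients of the Gegenbauer polynomial vanish above the degree and
off-parity. -/
lemma gegenbauer_coeff_eq_zero (α : ℚ) :
    ∀ n m : ℕ, (n < m ∨ m % 2 ≠ n % 2) → (gegenbauer α n).coeff m = 0
  | 0, m, h => by
    have hm : m ≠ 0 := by omega
    simp [gegenbauer, Polynomial.coeff_one, hm]
  | 1, m, h => by
    have hm : m ≠ 1 := by omega
    rw [gegenbauer, Polynomial.coeff_C_mul, Polynomial.coeff_X]
    simp [Ne.symm hm]
  | n + 2, m, h => by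
    rw [gegenbauer]
    rcases m with _ | m
    · have h1 : (gegenbauer α n).coeff 0 = 0 :=
        gegenbauer_coeff_eq_zero α n 0 (by omega)
      simp [mul_assoc, Polynomial.coeff_C_mul, Polynomial.mul_coeff_zero,
        Polynomial.coeff_X_zero, h1]
    · have h1 : (gegenbauer α (n + 1)).coeff m = 0 :=
        gegenbauer_coeff_eq_zero α (n + 1) m (by omega)
      have h2 : (gegenbauer α n).coeff (m + 1) = 0 :=
        gegenbauer_coeff_eq_zero α n (m + 1) (by omega)
      simp [mul_assoc, Polynomial.coeff_C_mul, Polynomial.coeff_X_mul, h1, h2]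


lemma gegenbauer_natDegree_le (α : ℚ) (n : ℕ) : (gegenbauer α n).natDegree ≤ n :=
  Polynomial.natDegree_le_iff_coeff_eq_zero.mpr fun m hm =>
    gegenbauer_coeff_eq_zero α n m (Or.inl hm)

lemma units_int_univ : (Finset.univ : Finset ℤˣ) = {1, -1} := by decide

lemma sum_units_pow_odd {e : ℕ} (he : Odd e) :
    ∑ u : ℤˣ, ((u : ℤ) : ℚ) ^ e = 0 := by
  rw [units_int_univ, Finset.sum_insert (by decide), Finset.sum_singleton]
  simp [he.neg_one_pow]

lemma prod_comp_univ {M : Type*} [CommMonoid M] {m d : ℕ} (g : Fin d → M) (f : Fin m → Fin d) :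
    ∏ j, g (f j) = ∏ i, g i ^ (Finset.univ.filter (fun j => f j = i)).card := by
  rw [Finset.prod_comp (s := (Finset.univ : Finset (Fin m))) g f]
  refine Finset.prod_subset (Finset.subset_univ _) fun i _ hi => ?_
  simp only [Finset.mem_image, Finset.mem_univ, true_and, not_exists] at hi
  have : (Finset.univ.filter fun j => f j = i) = ∅ := by
    ext j; simp [hi j]
  simp [this]

lemma card_filter_val_lt (d κ : ℕ) (hκ : κ ≤ d) :
    (Finset.univ.filter (fun i : Fin d => (i : ℕ) < κ)).card = κ := by
  have hmap : Finset.univ.filter (fun i : Fin d => (i : ℕ) < κ)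
      = Finset.univ.map (Fin.castLEOrderEmb hκ).toEmbedding := by
    ext i
    simp only [Finset.mem_filter, Finset.mem_univ, true_and, Finset.mem_map]
    constructor
    · intro hi
      exact ⟨⟨(i : ℕ), hi⟩, by simp [Fin.ext_iff]; rfl⟩
    · rintro ⟨a, -, rfl⟩
      simp
      exact a.isLt
  rw [hmap, Finset.card_map, Finset.card_univ, Fintype.card_fin]

lemma key_sum (d κ m : ℕ) (hκ : κ ≤ d) (h : m < κ ∨ m % 2 ≠ κ % 2) :
    ∑ ε : Fin d → ℤˣ,
      (∏ i ∈ Finset.univ.filter (fun i : Fin d => (i : ℕ) < κ), ((ε i : ℤ) : ℚ)) *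
        (∑ i, ((ε i : ℤ) : ℚ)) ^ m = 0 := by
  classical
  have step1 : ∀ ε : Fin d → ℤˣ,
      (∏ i ∈ Finset.univ.filter (fun i : Fin d => (i : ℕ) < κ), ((ε i : ℤ) : ℚ)) *
        (∑ i, ((ε i : ℤ) : ℚ)) ^ m
      = ∑ f : Fin m → Fin d, ∏ i : Fin d,
          ((ε i : ℤ) : ℚ) ^ ((if (i : ℕ) < κ then 1 else 0)
            + (Finset.univ.filter (fun j => f j = i)).card) := by
    intro ε
    have hpow : (∑ i, ((ε i : ℤ) : ℚ)) ^ m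
        = ∑ f : Fin m → Fin d, ∏ j : Fin m, ((ε (f j) : ℤ) : ℚ) := by
      have h0 : (∑ i, ((ε i : ℤ) : ℚ)) ^ m = ∏ _j : Fin m, (∑ i, ((ε i : ℤ) : ℚ)) := by
        simp
      rw [h0, Finset.prod_univ_sum (fun _ : Fin m => (Finset.univ : Finset (Fin d)))
          (fun _ i => ((ε i : ℤ) : ℚ)), Fintype.piFinset_univ]
    rw [hpow, Finset.mul_sum]
    refine Finset.sum_congr rfl fun f _ => ?_
    rw [prod_comp_univ (fun i => ((ε i : ℤ) : ℚ)) f, Finset.prod_filter,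
      ← Finset.prod_mul_distrib]
    refine Finset.prod_congr rfl fun i _ => ?_
    rw [pow_add]
    congr 1
    split_ifs <;> simp
  rw [Finset.sum_congr rfl fun ε _ => step1 ε, Finset.sum_comm]
  refine Finset.sum_eq_zero fun f _ => ?_
  set e : Fin d → ℕ := fun i =>
    (if (i : ℕ) < κ then 1 else 0) + (Finset.univ.filter (fun j => f j = i)).card with he
  have hps := Finset.prod_univ_sum (fun _ : Fin d => (Finset.univ : Finset ℤˣ))
    (fun i (u : ℤˣ) => ((u : ℤ) : ℚ) ^ e i)
  rw [Fintype.piFinset_univ] at hps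
  rw [← hps]
  obtain ⟨i₀, hodd⟩ : ∃ i, Odd (e i) := by
    by_contra hc
    push_neg at hc
    simp only [Nat.not_odd_iff_even] at hc
    have hw : ∑ i : Fin d, (if (i : ℕ) < κ then (1 : ℕ) else 0) = κ := by
      rw [Finset.sum_boole]
      exact card_filter_val_lt d κ hκ
    have hcard : ∑ i : Fin d, (Finset.univ.filter (fun j => f j = i)).card = m := by
      rw [← Finset.card_eq_sum_card_fiberwise (fun j _ => Finset.mem_univ (f j))]
      simp
    have hsum : ∑ i, e i = κ + m := by
      simp only [he, Finset.sum_add_distrib, hw, hcard]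
    rcases h with hlt | hpar
    · have h1 : ∀ i : Fin d, (i : ℕ) < κ →
          1 ≤ (Finset.univ.filter (fun j => f j = i)).card := by
        intro i hi
        have h2 := hc i
        simp only [he, hi, if_true] at h2
        have h3 := Nat.even_iff.mp h2
        omega
      have hκm : κ ≤ m := by
        calc κ = ∑ _i ∈ Finset.univ.filter (fun i : Fin d => (i : ℕ) < κ), 1 := by
              rw [Finset.sum_const, smul_eq_mul, mul_one, card_filter_val_lt d κ hκ]
          _ ≤ ∑ i ∈ Finset.univ.filter (fun i : Fin d => (i : ℕ) < κ),
              (Finset.univ.filter (fun j => f j = i)).card :=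
            Finset.sum_le_sum fun i hi => h1 i (Finset.mem_filter.mp hi).2
          _ ≤ ∑ i : Fin d, (Finset.univ.filter (fun j => f j = i)).card :=
            Finset.sum_le_sum_of_subset (Finset.filter_subset _ _)
          _ = m := hcard
      omega
    · have heach : ∀ i : Fin d, e i % 2 = 0 := fun i => Nat.even_iff.mp (hc i)
      have : (κ + m) % 2 = 0 := by
        rw [← hsum, Finset.sum_nat_mod]
        simp [heach]
      omega
  exact Finset.prod_eq_zero (Finset.mem_univ i₀) (sum_units_pow_odd hodd)

theorem lam_eq_zero (d κ n : ℕ) (hd : 3 ≤ d) (hκ : κ ≤ d)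
    (h : n < κ ∨ n % 2 ≠ κ % 2) : lam d κ n = 0 := by
  unfold lam
  rw [mul_eq_zero]
  right
  set P := gegenbauer ((d : ℚ) / 2 - 1) n with hP
  have hdeg : P.natDegree < n + 1 := Nat.lt_succ_of_le (gegenbauer_natDegree_le _ n)
  have hT : ∑ ε : Fin d → ℤˣ,
      (∏ i ∈ Finset.univ.filter (fun i : Fin d => (i : ℕ) < κ), ((ε i : ℤ) : ℚ)) *
        P.eval ((∑ i, ((ε i : ℤ) : ℚ)) / d) = 0 := by
    have heval : ∀ ε : Fin d → ℤˣ,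
        (∏ i ∈ Finset.univ.filter (fun i : Fin d => (i : ℕ) < κ), ((ε i : ℤ) : ℚ)) *
          P.eval ((∑ i, ((ε i : ℤ) : ℚ)) / d)
        = ∑ m ∈ Finset.range (n + 1),
            (P.coeff m * ((d : ℚ)⁻¹) ^ m) *
              ((∏ i ∈ Finset.univ.filter (fun i : Fin d => (i : ℕ) < κ), ((ε i : ℤ) : ℚ)) *
                (∑ i, ((ε i : ℤ) : ℚ)) ^ m) := by
      intro ε
      rw [Polynomial.eval_eq_sum_range' hdeg, Finset.mul_sum]
      refine Finset.sum_congr rfl fun m _ => ?_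
      rw [div_eq_mul_inv, mul_pow]
      ring
    rw [Finset.sum_congr rfl fun ε _ => heval ε, Finset.sum_comm]
    refine Finset.sum_eq_zero fun m hm => ?_
    rcases eq_or_ne (P.coeff m) 0 with hc | hc
    · simp [hc]
    · have hm' : m ≤ n := Nat.lt_succ_iff.mp (Finset.mem_range.mp hm)
      have hpar : m % 2 = n % 2 := by
        by_contra hp
        exact hc (gegenbauer_coeff_eq_zero _ n m (Or.inr hp))
      have hm2 : m < κ ∨ m % 2 ≠ κ % 2 := by
        rcases h with h1 | h1
        · exact Or.inl (lt_of_le_of_lt hm' h1)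
        · exact Or.inr (by omega)
      rw [← Finset.mul_sum, key_sum d κ m hκ hm2, mul_zero]
  have hsplit : ∀ ε : Fin d → ℤˣ,
      (∏ i ∈ Finset.univ.filter (fun i : Fin d => (i : ℕ) < κ), ((ε i : ℤ) : ℚ)) *
        (P.eval ((∑ i, ((ε i : ℤ) : ℚ)) / d) / P.eval 1)
      = ((∏ i ∈ Finset.univ.filter (fun i : Fin d => (i : ℕ) < κ), ((ε i : ℤ) : ℚ)) *
          P.eval ((∑ i, ((ε i : ℤ) : ℚ)) / d)) * (P.eval 1)⁻¹ := by
    intro ε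
    rw [div_eq_mul_inv, mul_assoc]
  rw [Finset.sum_congr rfl fun ε _ => hsplit ε, ← Finset.sum_mul, hT, zero_mul]
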